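/- Let w : S → [0,∞) be a measurable function on a finite measure space S with measure μ(S) = m, and suppose there are constants A ≥ 1 such that ‖w‖_{L^j(S)} ≤ A·j for every integer j ≥ 1. Then, with s₀ := (2Ae)^{-1}, it holds ∫_S exp(s₀ w) dμ ≤ 2 + m. -/

import Mathlib

open MeasureTheory
open scoped Nat

theorem stmt_3 {S : Type*} [MeasurableSpace S] (μ : Measure S) [IsFiniteMeasure μ]
    (w : S → ℝ) (hw : Measurable w) (hw0 : ∀ x, 0 ≤ w x) (A : ℝ) (hA : 1 ≤ A)
    (hint : ∀ j : ℕ, Integrable (fun x => w x ^ (j : ℝ)) μ)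
    (hLj : ∀ j : ℕ, 1 ≤ j → (∫ x, w x ^ (j : ℝ) ∂μ) ^ ((j : ℝ))⁻¹ ≤ A * j)
    (hexp : Integrable (fun x => Real.exp ((2 * A * Real.exp 1)⁻¹ * w x)) μ) :
    ∫ x, Real.exp ((2 * A * Real.exp 1)⁻¹ * w x) ∂μ ≤ 2 + (μ Set.univ).toReal := by
  have he : (0:ℝ) < Real.exp 1 := Real.exp_pos 1
  have hA0 : (0:ℝ) < A := lt_of_lt_of_le one_pos hA
  set s : ℝ := (2 * A * Real.exp 1)⁻¹ with hs
  have hs0 : 0 < s := by positivity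
  set m : ℝ := (μ Set.univ).toReal with hm
  have hm0 : 0 ≤ m := ENNReal.toReal_nonneg
  -- the terms of the series
  set f : ℕ → S → ℝ := fun j x => s ^ j / (j ! : ℝ) * w x ^ j with hf
  have hfnn : ∀ j x, 0 ≤ f j x := fun j x => by
    have := hw0 x; positivity
  have hintj : ∀ j : ℕ, Integrable (fun x => w x ^ j) μ := by
    intro j
    have := hint j
    simpa [Real.rpow_natCast] using this
  have hfint : ∀ j : ℕ, Integrable (f j) μ := fun j => (hintj j).const_mul _
  have hInn : ∀ j : ℕ, 0 ≤ ∫ x, w x ^ j ∂μ := fun j =>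
    integral_nonneg fun x => pow_nonneg (hw0 x) j
  -- moment bound
  have hI : ∀ j : ℕ, 1 ≤ j → ∫ x, w x ^ j ∂μ ≤ (A * j) ^ j := by
    intro j hj
    have h1 := hLj j hj
    simp only [Real.rpow_natCast] at h1
    have h2 := Real.rpow_inv_natCast_pow (hInn j) (by omega : j ≠ 0)
    calc ∫ x, w x ^ j ∂μ = ((∫ x, w x ^ j ∂μ) ^ ((j:ℝ))⁻¹) ^ j := h2.symm
      _ ≤ (A * j) ^ j := pow_le_pow_left₀ (Real.rpow_nonneg (hInn j) _) h1 j
  -- factorial bound : j^j / j! ≤ exp j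
  have hfac : ∀ j : ℕ, (j:ℝ) ^ j / j ! ≤ Real.exp j := by
    intro j
    have hsum := Real.summable_pow_div_factorial (j:ℝ)
    have h1 : (j:ℝ) ^ j / j ! ≤ ∑' n : ℕ, (j:ℝ) ^ n / n ! :=
      hsum.le_tsum j fun n _ => by positivity
    have h2 : Real.exp (j:ℝ) = ∑' n : ℕ, (j:ℝ) ^ n / n ! := by
      rw [Real.exp_eq_exp_ℝ, NormedSpace.exp_eq_tsum_div]
    linarith
  have hkey : A * s * Real.exp 1 = 1 / 2 := by
    rw [hs]; field_simp
  set c : ℕ → ℝ := fun j => ∫ x, f j x ∂μ with hc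
  have hcnn : ∀ j, 0 ≤ c j := fun j => integral_nonneg (hfnn j)
  have hc0 : c 0 = m := by
    simp [hc, hf, hm, Measure.real]
  -- bound for j ≥ 1
  have hcb : ∀ j : ℕ, 1 ≤ j → c j ≤ (1/2) ^ j := by
    intro j hj
    have hcj : c j = s ^ j / j ! * ∫ x, w x ^ j ∂μ := by
      rw [hc, hf]
      exact integral_const_mul _ _
    have h1 : c j ≤ s ^ j / j ! * (A * j) ^ j := by
      rw [hcj]
      exact mul_le_mul_of_nonneg_left (hI j hj) (by positivity)
    have h2 : s ^ j / j ! * (A * j) ^ j = (s * A) ^ j * ((j:ℝ) ^ j / j !) := by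
      rw [mul_pow, mul_pow]; ring
    have h3 : (s * A) ^ j * ((j:ℝ) ^ j / j !) ≤ (s * A) ^ j * Real.exp j :=
      mul_le_mul_of_nonneg_left (hfac j) (by positivity)
    have h4 : (s * A) ^ j * Real.exp j = (1/2) ^ j := by
      rw [show Real.exp (j:ℝ) = Real.exp 1 ^ j by
        rw [← Real.exp_nat_mul]; norm_num]
      rw [← mul_pow, show s * A * Real.exp 1 = 1 / 2 by rw [← hkey]; ring]
    linarith
  have hcb' : ∀ j : ℕ, c j ≤ (m + 1) * (1/2) ^ j := by
    intro j
    rcases Nat.eq_zero_or_pos j with h | h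
    · subst h; simp [hc0]
    · have := hcb j h
      have h2 : (1:ℝ) * (1/2) ^ j ≤ (m + 1) * (1/2) ^ j :=
        mul_le_mul_of_nonneg_right (by linarith) (by positivity)
      linarith
  have hgeo : Summable (fun j : ℕ => (m + 1) * (1/2:ℝ) ^ j) :=
    summable_geometric_two.mul_left _
  have hcs : Summable c := Summable.of_nonneg_of_le hcnn hcb' hgeo
  -- measurability
  have hmeas : ∀ j : ℕ, AEStronglyMeasurable (f j) μ := fun j =>
    ((hw.pow_const j).const_mul _).aestronglyMeasurable
  -- finiteness of the lintegral sum
  have hlin : ∀ j : ℕ, ∫⁻ x, ‖f j x‖₊ ∂μ = ENNReal.ofReal (c j) := by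
    intro j
    rw [ofReal_integral_eq_lintegral_ofReal (hfint j) (Filter.Eventually.of_forall (hfnn j))]
    congr 1
    ext x
    rw [← Real.enorm_eq_ofReal (hfnn j x)]; rfl
  have hfin : ∑' j : ℕ, ∫⁻ x, ‖f j x‖₊ ∂μ ≠ ⊤ := by
    simp only [hlin]
    rw [← ENNReal.ofReal_tsum_of_nonneg hcnn hcs]
    exact ENNReal.ofReal_ne_top
  -- expand the exponential
  have hpt : ∀ x, Real.exp (s * w x) = ∑' j : ℕ, f j x := by
    intro x
    rw [Real.exp_eq_exp_ℝ, NormedSpace.exp_eq_tsum_div]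
    exact tsum_congr fun j => by rw [hf]; simp [mul_pow]; ring
  have hint_eq : ∫ x, Real.exp (s * w x) ∂μ = ∑' j : ℕ, c j := by
    calc ∫ x, Real.exp (s * w x) ∂μ = ∫ x, ∑' j : ℕ, f j x ∂μ := by
          exact integral_congr_ae (Filter.Eventually.of_forall fun x => hpt x)
      _ = ∑' j : ℕ, c j := integral_tsum hmeas hfin
  -- sum the series
  have htail : ∑' j : ℕ, c (j + 1) ≤ 1 := by
    have h1 : ∑' j : ℕ, c (j + 1) ≤ ∑' j : ℕ, (1/2:ℝ) ^ (j + 1) := by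
      refine Summable.tsum_le_tsum (fun j => hcb (j + 1) (by omega)) ?_ ?_
      · exact (summable_nat_add_iff 1).mpr hcs
      · exact (summable_nat_add_iff 1).mpr summable_geometric_two
    have h2 : ∑' j : ℕ, (1/2:ℝ) ^ (j + 1) = 1 := by
      simp only [pow_succ, mul_comm]
      rw [tsum_mul_left, tsum_geometric_two]
      norm_num
    linarith
  have hsum_eq : ∑' j : ℕ, c j = m + ∑' j : ℕ, c (j + 1) := by
    rw [hcs.tsum_eq_zero_add, hc0]
  rw [hint_eq, hsum_eq]
  linarith
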